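/- Let β₀ ∈ (0,1). There exist positive constants D₁ and D₂ depending only on β₀ such that for all x > 0 and all t > 0: (2/(1+x^{1-β₀})) · ∫₀ᵗ∫₀ˢ r^{-β₀} e^{-r} dr ds ≤ ∫₀ᵗ∫₀ᵗ |r-s|^{-β₀} e^{-|r-s| x} dr ds ≤ (2/(1+x^{1-β₀})) · (D₁ t + D₂ t^{2-β₀}). -/

import Mathlib

open MeasureTheory Real Set

namespace Stmt1Aux

noncomputable def G (β₀ r : ℝ) : ℝ := ∫ u in Set.Ioc (0:ℝ) r, u ^ (-β₀) * Real.exp (-u)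

noncomputable def F (β₀ x r : ℝ) : ℝ := ∫ u in Set.Ioc (0:ℝ) r, u ^ (-β₀) * Real.exp (-(u * x))

variable {β₀ : ℝ}

lemma meas_h (β₀ x : ℝ) : Measurable (fun u : ℝ => u ^ (-β₀) * Real.exp (-(u * x))) := by
  fun_prop

lemma intInt (hb1 : β₀ < 1) {x r : ℝ} (hx : 0 ≤ x) (hr : 0 ≤ r) :
    IntervalIntegrable (fun u : ℝ => u ^ (-β₀) * Real.exp (-(u * x))) volume 0 r := by
  refine (intervalIntegral.intervalIntegrable_rpow' (r := -β₀) (a := 0) (b := r) (by linarith)).mono_fun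
    ((meas_h β₀ x).aestronglyMeasurable.restrict) ?_
  rw [uIoc_of_le hr]
  filter_upwards [ae_restrict_mem measurableSet_Ioc] with u hu
  have hu0 : 0 ≤ u := hu.1.le
  have h1 : Real.exp (-(u * x)) ≤ 1 := by
    rw [Real.exp_le_one_iff]
    nlinarith
  simp only [Real.norm_eq_abs, abs_mul, abs_of_nonneg (rpow_nonneg hu0 _),
    abs_of_pos (Real.exp_pos _)]
  nlinarith [rpow_nonneg hu0 (-β₀), Real.exp_pos (-(u * x))]


lemma F_integrableOn (hb1 : β₀ < 1) {x : ℝ} (hx : 0 ≤ x) (r : ℝ) :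
    IntegrableOn (fun u : ℝ => u ^ (-β₀) * Real.exp (-(u * x))) (Set.Ioc 0 r) := by
  rcases le_or_gt r 0 with h | h
  · rw [Set.Ioc_eq_empty (by exact fun hc => absurd (hc.trans_le h) (lt_irrefl 0))]
    exact integrableOn_empty
  · exact (intervalIntegrable_iff_integrableOn_Ioc_of_le h.le).mp (intInt hb1 hx h.le)

lemma h_nonneg_ae (β₀ x r : ℝ) :
    0 ≤ᵐ[volume.restrict (Set.Ioc (0:ℝ) r)] fun u : ℝ => u ^ (-β₀) * Real.exp (-(u * x)) := by
  filter_upwards [ae_restrict_mem measurableSet_Ioc] with u hu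
  exact mul_nonneg (rpow_nonneg hu.1.le _) (Real.exp_pos _).le

lemma F_nonneg (β₀ x r : ℝ) : 0 ≤ F β₀ x r :=
  setIntegral_nonneg measurableSet_Ioc fun u hu =>
    mul_nonneg (rpow_nonneg hu.1.le _) (Real.exp_pos _).le

lemma F_mono (hb1 : β₀ < 1) {x : ℝ} (hx : 0 ≤ x) : Monotone (F β₀ x) := fun r₁ r₂ h =>
  setIntegral_mono_set (F_integrableOn hb1 hx r₂) (h_nonneg_ae β₀ x r₂)
    (HasSubset.Subset.eventuallyLE (Set.Ioc_subset_Ioc_right h))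

lemma G_eq (r : ℝ) : G β₀ r = F β₀ 1 r := by
  simp only [G, F, mul_one]

lemma G_nonneg (β₀ r : ℝ) : 0 ≤ G β₀ r := by rw [G_eq]; exact F_nonneg _ _ _

lemma G_mono (hb1 : β₀ < 1) : Monotone (G β₀) := by
  intro r₁ r₂ h
  rw [G_eq, G_eq]
  exact F_mono hb1 zero_le_one h

lemma F_scale (hb0 : 0 < β₀) {x r : ℝ} (hx : 0 < x) (hr : 0 ≤ r) :
    F β₀ x r = x ^ (β₀ - 1) * G β₀ (r * x) := by
  have hrx : 0 ≤ r * x := mul_nonneg hr hx.le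
  rw [F, G, ← intervalIntegral.integral_of_le hr, ← intervalIntegral.integral_of_le hrx]
  have key : ∀ u ∈ Set.uIcc (0:ℝ) r,
      u ^ (-β₀) * Real.exp (-(u * x))
        = x ^ β₀ * ((fun v : ℝ => v ^ (-β₀) * Real.exp (-v)) (u * x)) := by
    intro u hu
    rw [Set.uIcc_of_le hr] at hu
    simp only []
    rw [Real.mul_rpow hu.1 hx.le]
    rw [show x ^ β₀ * (u ^ (-β₀) * x ^ (-β₀) * Real.exp (-(u * x)))
        = (x ^ β₀ * x ^ (-β₀)) * (u ^ (-β₀) * Real.exp (-(u * x))) by ring]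
    rw [← Real.rpow_add hx, add_neg_cancel, Real.rpow_zero, one_mul]
  rw [intervalIntegral.integral_congr key, intervalIntegral.integral_const_mul]
  have hcomp := intervalIntegral.integral_comp_mul_right (a := 0) (b := r) (c := x)
    (fun v : ℝ => v ^ (-β₀) * Real.exp (-v)) (ne_of_gt hx)
  rw [hcomp, zero_mul, smul_eq_mul, ← mul_assoc]
  congr 1
  rw [show β₀ - 1 = β₀ + (-1) by ring, Real.rpow_add hx, Real.rpow_neg_one]

lemma g_integrableOn_Ioi (hb0 : 0 < β₀) (hb1 : β₀ < 1) :
    IntegrableOn (fun u : ℝ => u ^ (-β₀) * Real.exp (-u)) (Set.Ioi 0) := by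
  have := Real.GammaIntegral_convergent (s := 1 - β₀) (by linarith)
  refine this.congr_fun (fun u hu => ?_) measurableSet_Ioi
  rw [mul_comm]
  norm_num

lemma G_le_Gamma (hb0 : 0 < β₀) (hb1 : β₀ < 1) (r : ℝ) :
    G β₀ r ≤ Real.Gamma (1 - β₀) := by
  rw [Real.Gamma_eq_integral (by linarith : (0:ℝ) < 1 - β₀)]
  have heq : (∫ u in Set.Ioi (0:ℝ), Real.exp (-u) * u ^ (1 - β₀ - 1))
      = ∫ u in Set.Ioi (0:ℝ), u ^ (-β₀) * Real.exp (-u) := by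
    refine setIntegral_congr_fun measurableSet_Ioi fun u hu => ?_
    rw [mul_comm]
    norm_num
  rw [heq, G]
  refine setIntegral_mono_set (g_integrableOn_Ioi hb0 hb1) ?_
    (HasSubset.Subset.eventuallyLE Set.Ioc_subset_Ioi_self)
  filter_upwards [ae_restrict_mem measurableSet_Ioi] with u hu
  exact mul_nonneg (rpow_nonneg (le_of_lt hu) _) (Real.exp_pos _).le

lemma F_le_rpow (hb0 : 0 < β₀) (hb1 : β₀ < 1) {x r : ℝ} (hx : 0 ≤ x) (hr : 0 ≤ r) :
    F β₀ x r ≤ r ^ (1 - β₀) / (1 - β₀) := by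
  have h1 : F β₀ x r ≤ ∫ u in Set.Ioc (0:ℝ) r, u ^ (-β₀) := by
    refine setIntegral_mono_on (F_integrableOn hb1 hx r)
      ((intervalIntegrable_iff_integrableOn_Ioc_of_le hr).mp
        (intervalIntegral.intervalIntegrable_rpow' (by linarith)))
      measurableSet_Ioc fun u hu => ?_
    have : Real.exp (-(u * x)) ≤ 1 := by
      rw [Real.exp_le_one_iff]
      nlinarith [hu.1.le]
    nlinarith [rpow_nonneg hu.1.le (-β₀)]
  have h2 : (∫ u in Set.Ioc (0:ℝ) r, u ^ (-β₀)) = r ^ (1 - β₀) / (1 - β₀) := by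
    rw [← intervalIntegral.integral_of_le hr, integral_rpow (Or.inl (by linarith))]
    rw [Real.zero_rpow (by linarith : -β₀ + 1 ≠ 0)]
    norm_num
    rw [show -β₀ + 1 = 1 - β₀ by ring]
  linarith


lemma F_lower (hb0 : 0 < β₀) (hb1 : β₀ < 1) {x r : ℝ} (hx : 0 < x) (hr : 0 ≤ r) :
    (1 / (1 + x ^ (1 - β₀))) * G β₀ r ≤ F β₀ x r := by
  have hX : 0 < x ^ (1 - β₀) := rpow_pos_of_pos hx _
  have hGnn := G_nonneg β₀ r
  rcases le_total x 1 with h | h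
  · have hGi : IntegrableOn (fun u : ℝ => u ^ (-β₀) * Real.exp (-u)) (Set.Ioc 0 r) := by
      simpa [mul_one] using F_integrableOn (β₀ := β₀) hb1 zero_le_one r
    have h1 : G β₀ r ≤ F β₀ x r := by
      rw [G, F]
      refine setIntegral_mono_on hGi
        (F_integrableOn hb1 hx.le r) measurableSet_Ioc fun u hu => ?_
      have : Real.exp (-u) ≤ Real.exp (-(u * x)) := by
        rw [Real.exp_le_exp]
        nlinarith [hu.1.le]
      nlinarith [rpow_nonneg hu.1.le (-β₀), Real.exp_pos (-u)]
    have h2 : (1 / (1 + x ^ (1 - β₀))) * G β₀ r ≤ 1 * G β₀ r := by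
      apply mul_le_mul_of_nonneg_right _ hGnn
      rw [div_le_one (by positivity)]
      linarith
    rw [one_mul] at h2
    exact h2.trans h1
  · rw [F_scale hb0 hx hr]
    have h2 : G β₀ r ≤ G β₀ (r * x) := G_mono hb1 (le_mul_of_one_le_right hr h)
    have h3 : 1 / (1 + x ^ (1 - β₀)) ≤ x ^ (β₀ - 1) := by
      rw [show β₀ - 1 = -(1 - β₀) by ring, Real.rpow_neg hx.le, ← one_div]
      exact one_div_le_one_div_of_le hX (by linarith)
    calc (1 / (1 + x ^ (1 - β₀))) * G β₀ r ≤ x ^ (β₀ - 1) * G β₀ r :=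
          mul_le_mul_of_nonneg_right h3 hGnn
      _ ≤ x ^ (β₀ - 1) * G β₀ (r * x) :=
          mul_le_mul_of_nonneg_left h2 (rpow_nonneg hx.le _)

lemma F_upper (hb0 : 0 < β₀) (hb1 : β₀ < 1) {x r : ℝ} (hx : 0 < x) (hr : 0 ≤ r) :
    F β₀ x r ≤ (2 / (1 + x ^ (1 - β₀))) * (Real.Gamma (1 - β₀) + r ^ (1 - β₀) / (1 - β₀)) := by
  have hX : 0 < x ^ (1 - β₀) := rpow_pos_of_pos hx _
  have hG := Real.Gamma_pos_of_pos (show (0:ℝ) < 1 - β₀ by linarith)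
  have hpsi : 0 ≤ r ^ (1 - β₀) / (1 - β₀) := by
    apply div_nonneg (rpow_nonneg hr _) (by linarith)
  rcases le_total x 1 with h | h
  · have hX1 : x ^ (1 - β₀) ≤ 1 := Real.rpow_le_one hx.le h (by linarith)
    have h1 : F β₀ x r ≤ r ^ (1 - β₀) / (1 - β₀) := F_le_rpow hb0 hb1 hx.le hr
    have h2 : (1:ℝ) ≤ 2 / (1 + x ^ (1 - β₀)) := by
      rw [le_div_iff₀ (by positivity)]
      linarith
    nlinarith
  · have hX1 : (1:ℝ) ≤ x ^ (1 - β₀) := Real.one_le_rpow h (by linarith)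
    rw [F_scale hb0 hx hr]
    have h1 : G β₀ (r * x) ≤ Real.Gamma (1 - β₀) := G_le_Gamma hb0 hb1 _
    have h2 : x ^ (β₀ - 1) ≤ 2 / (1 + x ^ (1 - β₀)) := by
      rw [show β₀ - 1 = -(1 - β₀) by ring, Real.rpow_neg hx.le, inv_eq_one_div,
        div_le_div_iff₀ hX (by positivity)]
      linarith
    calc x ^ (β₀ - 1) * G β₀ (r * x) ≤ x ^ (β₀ - 1) * Real.Gamma (1 - β₀) :=
          mul_le_mul_of_nonneg_left h1 (rpow_nonneg hx.le _)
      _ ≤ (2 / (1 + x ^ (1 - β₀))) * Real.Gamma (1 - β₀) :=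
          mul_le_mul_of_nonneg_right h2 hG.le
      _ ≤ (2 / (1 + x ^ (1 - β₀))) * (Real.Gamma (1 - β₀) + r ^ (1 - β₀) / (1 - β₀)) := by
          apply mul_le_mul_of_nonneg_left _ (by positivity)
          linarith


lemma inner_eq (hb1 : β₀ < 1) {x t r : ℝ} (hx : 0 < x) (hr : r ∈ Set.Ioc (0:ℝ) t) :
    (∫ s in Set.Ioc (0:ℝ) t, |r - s| ^ (-β₀) * Real.exp (-(|r - s| * x)))
      = F β₀ x r + F β₀ x (t - r) := by
  obtain ⟨hr0, hrt⟩ := hr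
  have ht0 : (0:ℝ) ≤ t := hr0.le.trans hrt
  have htr : (0:ℝ) ≤ t - r := by linarith
  -- integrability on [0, r]
  have hcomp1 : IntervalIntegrable (fun s : ℝ => (r - s) ^ (-β₀) * Real.exp (-((r - s) * x)))
      volume 0 r := by
    have := ((intInt hb1 hx.le hr0.le).comp_sub_left r).symm
    simpa using this
  have i1 : IntervalIntegrable (fun s : ℝ => |r - s| ^ (-β₀) * Real.exp (-(|r - s| * x)))
      volume 0 r := by
    rw [intervalIntegrable_iff_integrableOn_Ioc_of_le hr0.le] at hcomp1 ⊢
    refine hcomp1.congr_fun (fun s hs => ?_) measurableSet_Ioc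
    rw [abs_of_nonneg (by linarith [hs.2] : (0:ℝ) ≤ r - s)]
  have hcomp2 : IntervalIntegrable (fun s : ℝ => (s - r) ^ (-β₀) * Real.exp (-((s - r) * x)))
      volume r t := by
    have := (intInt hb1 hx.le htr).comp_sub_right r
    simpa using this
  have i2 : IntervalIntegrable (fun s : ℝ => |r - s| ^ (-β₀) * Real.exp (-(|r - s| * x)))
      volume r t := by
    rw [intervalIntegrable_iff_integrableOn_Ioc_of_le hrt] at hcomp2 ⊢
    refine hcomp2.congr_fun (fun s hs => ?_) measurableSet_Ioc
    rw [abs_of_nonpos (by linarith [hs.1] : r - s ≤ 0), neg_sub]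
  rw [← intervalIntegral.integral_of_le ht0, ← intervalIntegral.integral_add_adjacent_intervals i1 i2]
  congr 1
  · have key : ∀ s ∈ Set.uIcc (0:ℝ) r,
        |r - s| ^ (-β₀) * Real.exp (-(|r - s| * x))
          = (fun u : ℝ => u ^ (-β₀) * Real.exp (-(u * x))) (r - s) := by
      intro s hs
      rw [Set.uIcc_of_le hr0.le] at hs
      simp only []
      rw [abs_of_nonneg (by linarith [hs.2] : (0:ℝ) ≤ r - s)]
    rw [intervalIntegral.integral_congr key,
      intervalIntegral.integral_comp_sub_left (fun u : ℝ => u ^ (-β₀) * Real.exp (-(u * x))) r,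
      sub_self, sub_zero, F, intervalIntegral.integral_of_le hr0.le]
  · have key : ∀ s ∈ Set.uIcc r t,
        |r - s| ^ (-β₀) * Real.exp (-(|r - s| * x))
          = (fun u : ℝ => u ^ (-β₀) * Real.exp (-(u * x))) (s - r) := by
      intro s hs
      rw [Set.uIcc_of_le hrt] at hs
      simp only []
      rw [abs_of_nonpos (by linarith [hs.1] : r - s ≤ 0), neg_sub]
    rw [intervalIntegral.integral_congr key,
      intervalIntegral.integral_comp_sub_right (fun u : ℝ => u ^ (-β₀) * Real.exp (-(u * x))) r,
      sub_self, F, intervalIntegral.integral_of_le htr]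

end Stmt1Aux

open Stmt1Aux in
theorem stmt1 (β₀ : ℝ) (hβ : β₀ ∈ Set.Ioo (0:ℝ) 1) :
    ∃ D₁ D₂ : ℝ, 0 < D₁ ∧ 0 < D₂ ∧ ∀ x > (0:ℝ), ∀ t > (0:ℝ),
      (2 / (1 + x ^ (1 - β₀))) *
          (∫ s in Set.Ioc (0:ℝ) t, ∫ r in Set.Ioc (0:ℝ) s, r ^ (-β₀) * Real.exp (-r))
        ≤ (∫ r in Set.Ioc (0:ℝ) t, ∫ s in Set.Ioc (0:ℝ) t,
            |r - s| ^ (-β₀) * Real.exp (-(|r - s| * x))) ∧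
      (∫ r in Set.Ioc (0:ℝ) t, ∫ s in Set.Ioc (0:ℝ) t,
            |r - s| ^ (-β₀) * Real.exp (-(|r - s| * x)))
        ≤ (2 / (1 + x ^ (1 - β₀))) * (D₁ * t + D₂ * t ^ (2 - β₀)) := by
  obtain ⟨hb0, hb1⟩ := hβ
  have hΓ : 0 < Real.Gamma (1 - β₀) := Real.Gamma_pos_of_pos (by linarith)
  refine ⟨2 * Real.Gamma (1 - β₀), 2 / (1 - β₀), mul_pos two_pos hΓ, div_pos two_pos (by linarith), ?_⟩
  intro x hx t ht
  have hX : 0 < x ^ (1 - β₀) := rpow_pos_of_pos hx _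
  have h1X : (0:ℝ) < 1 + x ^ (1 - β₀) := by linarith
  -- integrability of the pieces in r
  have hFi : IntegrableOn (F β₀ x) (Set.Ioc 0 t) :=
    (((F_mono hb1 hx.le).monotoneOn _).integrableOn_isCompact
      (isCompact_Icc (a := (0:ℝ)) (b := t))).mono_set Set.Ioc_subset_Icc_self
  have hFanti : Antitone (fun r => F β₀ x (t - r)) :=
    fun r₁ r₂ h => F_mono hb1 hx.le (sub_le_sub_left h t)
  have hFrev : IntegrableOn (fun r => F β₀ x (t - r)) (Set.Ioc 0 t) :=
    (AntitoneOn.integrableOn_isCompact (isCompact_Icc (a := (0:ℝ)) (b := t))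
      (hFanti.antitoneOn _)).mono_set Set.Ioc_subset_Icc_self
  have hGi : IntegrableOn (G β₀) (Set.Ioc 0 t) :=
    (((G_mono hb1).monotoneOn _).integrableOn_isCompact
      (isCompact_Icc (a := (0:ℝ)) (b := t))).mono_set Set.Ioc_subset_Icc_self
  have hGanti : Antitone (fun r => G β₀ (t - r)) :=
    fun r₁ r₂ h => G_mono hb1 (sub_le_sub_left h t)
  have hGrev : IntegrableOn (fun r => G β₀ (t - r)) (Set.Ioc 0 t) :=
    (AntitoneOn.integrableOn_isCompact (isCompact_Icc (a := (0:ℝ)) (b := t))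
      (hGanti.antitoneOn _)).mono_set Set.Ioc_subset_Icc_self
  -- rewrite the double integral
  have hMeq : (∫ r in Set.Ioc (0:ℝ) t, ∫ s in Set.Ioc (0:ℝ) t,
      |r - s| ^ (-β₀) * Real.exp (-(|r - s| * x)))
      = ∫ r in Set.Ioc (0:ℝ) t, (F β₀ x r + F β₀ x (t - r)) :=
    setIntegral_congr_fun measurableSet_Ioc fun r hr => inner_eq hb1 hx hr
  -- reflection identity
  have hrefl : (∫ r in Set.Ioc (0:ℝ) t, G β₀ (t - r)) = ∫ r in Set.Ioc (0:ℝ) t, G β₀ r := by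
    rw [← intervalIntegral.integral_of_le ht.le, ← intervalIntegral.integral_of_le ht.le,
      intervalIntegral.integral_comp_sub_left (G β₀) t, sub_self, sub_zero]
  have hGdef : (∫ s in Set.Ioc (0:ℝ) t, ∫ r in Set.Ioc (0:ℝ) s, r ^ (-β₀) * Real.exp (-r))
      = ∫ s in Set.Ioc (0:ℝ) t, G β₀ s := rfl
  constructor
  · -- lower bound
    rw [hMeq, hGdef]
    have key : ∀ r ∈ Set.Ioc (0:ℝ) t,
        (1 / (1 + x ^ (1 - β₀))) * G β₀ r + (1 / (1 + x ^ (1 - β₀))) * G β₀ (t - r)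
          ≤ F β₀ x r + F β₀ x (t - r) := by
      intro r hr
      exact add_le_add (F_lower hb0 hb1 hx hr.1.le) (F_lower hb0 hb1 hx (by linarith [hr.2]))
    have hmono : (∫ r in Set.Ioc (0:ℝ) t,
        (1 / (1 + x ^ (1 - β₀)) * G β₀ r + 1 / (1 + x ^ (1 - β₀)) * G β₀ (t - r)))
        ≤ ∫ r in Set.Ioc (0:ℝ) t, (F β₀ x r + F β₀ x (t - r)) := setIntegral_mono_on
      ((hGi.const_mul (1 / (1 + x ^ (1 - β₀)))).add (hGrev.const_mul (1 / (1 + x ^ (1 - β₀)))))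
      (hFi.add hFrev) measurableSet_Ioc key
    rw [integral_add (hGi.const_mul _) (hGrev.const_mul _), integral_const_mul,
      integral_const_mul, hrefl] at hmono
    calc (2 / (1 + x ^ (1 - β₀))) * ∫ s in Set.Ioc (0:ℝ) t, G β₀ s
        = (1 / (1 + x ^ (1 - β₀))) * (∫ r in Set.Ioc (0:ℝ) t, G β₀ r)
          + (1 / (1 + x ^ (1 - β₀))) * (∫ r in Set.Ioc (0:ℝ) t, G β₀ r) := by ring
      _ ≤ _ := hmono
  · -- upper bound
    rw [hMeq]
    set C : ℝ := (2 / (1 + x ^ (1 - β₀)))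
      * (Real.Gamma (1 - β₀) + t ^ (1 - β₀) / (1 - β₀)) with hC
    have key : ∀ r ∈ Set.Ioc (0:ℝ) t, F β₀ x r + F β₀ x (t - r) ≤ C + C := by
      intro r hr
      have h1 : F β₀ x r ≤ F β₀ x t := F_mono hb1 hx.le hr.2
      have h2 : F β₀ x (t - r) ≤ F β₀ x t := F_mono hb1 hx.le (by linarith [hr.1])
      have h3 : F β₀ x t ≤ C := F_upper hb0 hb1 hx ht.le
      exact add_le_add (h1.trans h3) (h2.trans h3)
    have hmono : (∫ r in Set.Ioc (0:ℝ) t, (F β₀ x r + F β₀ x (t - r)))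
        ≤ ∫ _r in Set.Ioc (0:ℝ) t, (C + C) := setIntegral_mono_on (hFi.add hFrev)
      (integrableOn_const measure_Ioc_lt_top.ne) measurableSet_Ioc key
    rw [setIntegral_const, Real.volume_real_Ioc, smul_eq_mul,
      max_eq_left (by linarith : (0:ℝ) ≤ t - 0), sub_zero] at hmono
    refine hmono.trans (le_of_eq ?_)
    have ht2 : t ^ (2 - β₀) = t * t ^ (1 - β₀) := by
      rw [show (2:ℝ) - β₀ = 1 + (1 - β₀) by ring, Real.rpow_add ht, Real.rpow_one]
    rw [ht2, hC]
    field_simp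
    ring
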